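/- Choosing d = ⌈√((2/λ)·log₂(2N))⌉ and q = ⌈2^{√((λ/2)·log₂(2N))}⌉ with λ = (log₂ e)/2, one has q^d ≥ 2N and λ·d + log₂(d·q²) = 2√(2λ·log₂ N) + o(√(log₂ N)) as N → ∞. -/

import Mathlib

open Filter

open Asymptotics


private lemma sqrt_isLittleO_id : (fun x : ℝ => Real.sqrt x) =o[atTop] (fun x : ℝ => x) := by
  rw [isLittleO_iff]
  intro c hc
  filter_upwards [eventually_ge_atTop (max 1 (c⁻¹ ^ 2))] with x hx
  have hx1 : (1:ℝ) ≤ x := le_trans (le_max_left _ _) hx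
  have hx2 : c⁻¹ ^ 2 ≤ x := le_trans (le_max_right _ _) hx
  have hx0 : (0:ℝ) ≤ x := by linarith
  rw [Real.norm_eq_abs, Real.norm_eq_abs, abs_of_nonneg (Real.sqrt_nonneg _), abs_of_nonneg hx0]
  have h1 : c⁻¹ ≤ Real.sqrt x := by
    rw [show c⁻¹ = Real.sqrt (c⁻¹ ^ 2) from (Real.sqrt_sq (by positivity)).symm]
    exact Real.sqrt_le_sqrt hx2
  have h2 : (1:ℝ) ≤ c * Real.sqrt x := by
    rw [← mul_inv_cancel₀ hc.ne']
    exact mul_le_mul_of_nonneg_left h1 hc.le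
  nlinarith [Real.sq_sqrt hx0, Real.sqrt_nonneg x,
    mul_nonneg (by linarith : (0:ℝ) ≤ c * Real.sqrt x - 1) (Real.sqrt_nonneg x)]

private lemma sqrt_tendsto_atTop : Tendsto Real.sqrt atTop atTop := by
  rw [tendsto_atTop_atTop]
  intro b
  refine ⟨b ^ 2, fun a ha => ?_⟩
  calc b ≤ |b| := le_abs_self b
    _ = Real.sqrt (b ^ 2) := (Real.sqrt_sq_eq_abs b).symm
    _ ≤ Real.sqrt a := Real.sqrt_le_sqrt ha

private lemma sqrt_add_le' {x y : ℝ} (hx : 0 ≤ x) (hy : 0 ≤ y) :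
    Real.sqrt (x + y) ≤ Real.sqrt x + Real.sqrt y := by
  rw [show Real.sqrt x + Real.sqrt y =
      Real.sqrt ((Real.sqrt x + Real.sqrt y) ^ 2) from
    (Real.sqrt_sq (by positivity)).symm]
  apply Real.sqrt_le_sqrt
  nlinarith [Real.sq_sqrt hx, Real.sq_sqrt hy, Real.sqrt_nonneg x, Real.sqrt_nonneg y,
    mul_nonneg (Real.sqrt_nonneg x) (Real.sqrt_nonneg y)]

set_option maxHeartbeats 1000000

/-- Parameter optimization: with λ = (log₂ e)/2, d = ⌈√((2/λ)·log₂(2N))⌉ and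
q = ⌈2^{√((λ/2)·log₂(2N))}⌉, one has q^d ≥ 2N and
λd + log₂(dq²) = 2√(2λ·log₂ N) + o(√(log₂ N)). -/
theorem stmt_14 (lam : ℝ) (hlam : lam = Real.logb 2 (Real.exp 1) / 2)
    (d q : ℕ → ℕ)
    (hd : ∀ N : ℕ, d N = ⌈Real.sqrt ((2 / lam) * Real.logb 2 (2 * N))⌉₊)
    (hq : ∀ N : ℕ, q N = ⌈(2 : ℝ) ^ Real.sqrt ((lam / 2) * Real.logb 2 (2 * N))⌉₊) :
    (∀ N : ℕ, 1 ≤ N → (2 * N : ℝ) ≤ (q N : ℝ) ^ d N) ∧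
    (fun N : ℕ => lam * d N + Real.logb 2 ((d N : ℝ) * (q N : ℝ) ^ 2) -
        2 * Real.sqrt (2 * lam * Real.logb 2 N))
      =o[atTop] (fun N : ℕ => Real.sqrt (Real.logb 2 N)) := by
  have hlog2 : (0:ℝ) < Real.log 2 := Real.log_pos one_lt_two
  have hlam' : lam = 1 / (2 * Real.log 2) := by
    rw [hlam, Real.logb, Real.log_exp]; ring
  have hlam_pos : 0 < lam := by rw [hlam']; positivity
  have hlam_lt : lam < 1 := by
    rw [hlam']
    rw [div_lt_one (by positivity)]
    nlinarith [Real.log_two_gt_d9]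
  have hlam_half : 1/2 < lam := by
    rw [hlam']
    rw [lt_div_iff₀ (by positivity)]
    nlinarith [Real.log_two_lt_d9]
  -- basic per-N facts (N ≥ 1)
  have hL0 : ∀ N : ℕ, 1 ≤ N → 0 ≤ Real.logb 2 (2 * (N:ℝ)) := by
    intro N hN
    have : (1:ℝ) ≤ 2 * N := by
      have : (1:ℝ) ≤ N := by exact_mod_cast hN
      linarith
    exact Real.logb_nonneg one_lt_two this
  have hst : ∀ N : ℕ, 1 ≤ N →
      Real.sqrt ((lam / 2) * Real.logb 2 (2 * (N:ℝ))) *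
      Real.sqrt ((2 / lam) * Real.logb 2 (2 * (N:ℝ))) = Real.logb 2 (2 * (N:ℝ)) := by
    intro N hN
    set L := Real.logb 2 (2 * (N:ℝ)) with hLdef
    rw [← Real.sqrt_mul (mul_nonneg (by linarith : (0:ℝ) ≤ lam/2) (hL0 N hN))]
    rw [show lam / 2 * L * (2 / lam * L) = L ^ 2 by field_simp]
    exact Real.sqrt_sq (hL0 N hN)
  constructor
  · -- part 1
    intro N hN
    have hN1 : (1:ℝ) ≤ N := by exact_mod_cast hN
    set L := Real.logb 2 (2 * (N:ℝ)) with hLdef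
    set s := Real.sqrt ((lam / 2) * L) with hsdef
    set t := Real.sqrt ((2 / lam) * L) with htdef
    have hq1 : (2:ℝ) ^ s ≤ q N := by rw [hq]; exact Nat.le_ceil _
    have hd1 : t ≤ d N := by rw [hd]; exact Nat.le_ceil _
    calc (2 * N : ℝ) = 2 ^ L := (Real.rpow_logb two_pos (by norm_num) (by linarith)).symm
      _ = 2 ^ (s * t) := by rw [hst N hN]
      _ ≤ 2 ^ (s * (d N : ℝ)) := by
          apply (Real.rpow_le_rpow_left_iff one_lt_two).mpr
          exact mul_le_mul_of_nonneg_left hd1 (Real.sqrt_nonneg _)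
      _ = ((2:ℝ) ^ s) ^ (d N) := by
          rw [Real.rpow_mul (by norm_num), Real.rpow_natCast]
      _ ≤ (q N : ℝ) ^ (d N) := pow_le_pow_left₀ (by positivity) hq1 _
  ·    -- part 2
    set ℓ : ℕ → ℝ := fun N => Real.logb 2 N with hℓdef
    have hℓT : Tendsto ℓ atTop atTop :=
      (Real.tendsto_logb_atTop one_lt_two).comp tendsto_natCast_atTop_atTop
    have hsqT : Tendsto (fun N : ℕ => Real.sqrt (ℓ N)) atTop atTop :=
      sqrt_tendsto_atTop.comp hℓT
    have hfacts : ∀ᶠ N : ℕ in atTop,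
        1 ≤ ℓ N ∧ Real.logb 2 (2 * (N:ℝ)) = 1 + ℓ N ∧ 1 ≤ N := by
      filter_upwards [eventually_ge_atTop 2] with N hN
      have hN2 : (2:ℝ) ≤ N := by exact_mod_cast hN
      have hNpos : (0:ℝ) < N := by linarith
      refine ⟨?_, ?_, by omega⟩
      · have := Real.logb_le_logb_of_le one_lt_two two_pos hN2
        simpa [Real.logb_self_eq_one] using this
      · rw [Real.logb_mul two_ne_zero (ne_of_gt hNpos)]
        simp [Real.logb_self_eq_one, hℓdef]
    set g : ℕ → ℝ := fun N => Real.logb 2 (d N) with hgdef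
    have claimB : g =o[atTop] fun N : ℕ => Real.sqrt (ℓ N) := by
      have hbig : g =O[atTop] fun N : ℕ => Real.sqrt (Real.sqrt (ℓ N)) := by
        rw [isBigO_iff]
        refine ⟨4 / Real.log 2, ?_⟩
        filter_upwards [hfacts] with N hF
        obtain ⟨hℓ1, hL, hN1⟩ := hF
        have hsℓ1 : (1:ℝ) ≤ Real.sqrt (ℓ N) := by
          calc (1:ℝ) = Real.sqrt 1 := Real.sqrt_one.symm
            _ ≤ Real.sqrt (ℓ N) := Real.sqrt_le_sqrt hℓ1
        set t := Real.sqrt ((2 / lam) * Real.logb 2 (2 * (N:ℝ))) with htdef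
        have ht1 : 1 ≤ t := by
          rw [htdef]
          calc (1:ℝ) = Real.sqrt 1 := Real.sqrt_one.symm
            _ ≤ _ := by
              apply Real.sqrt_le_sqrt
              rw [hL]
              have h2l : (2:ℝ) ≤ 2 / lam := by
                rw [le_div_iff₀ hlam_pos]; nlinarith
              nlinarith
        have hd_lb : (1:ℝ) ≤ (d N : ℝ) := by
          rw [hd N]
          exact le_trans ht1 (Nat.le_ceil t)
        have hd_ub : (d N : ℝ) ≤ 4 * Real.sqrt (ℓ N) := by
          rw [hd N]
          have h1 : ((⌈t⌉₊ : ℕ) : ℝ) < t + 1 := Nat.ceil_lt_add_one (Real.sqrt_nonneg _)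
          have h2 : t ≤ 3 * Real.sqrt (ℓ N) := by
            rw [htdef]
            have h3 : (2 / lam) * Real.logb 2 (2 * (N:ℝ)) ≤ 9 * ℓ N := by
              rw [hL]
              have h2l : 2 / lam ≤ 4 := by
                rw [div_le_iff₀ hlam_pos]; nlinarith
              have hLpos : (0:ℝ) ≤ 1 + ℓ N := by linarith
              nlinarith
            calc Real.sqrt ((2 / lam) * Real.logb 2 (2 * (N:ℝ)))
                ≤ Real.sqrt (9 * ℓ N) := Real.sqrt_le_sqrt h3
              _ = 3 * Real.sqrt (ℓ N) := by
                  rw [show (9:ℝ) * ℓ N = 3 ^ 2 * ℓ N by norm_num,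
                    Real.sqrt_mul (by positivity), Real.sqrt_sq (by norm_num)]
          linarith
        have hgN : g N = Real.log (d N) / Real.log 2 := rfl
        have hlogd : Real.log (d N) ≤ 4 * Real.sqrt (Real.sqrt (ℓ N)) := by
          have hdpos : (0:ℝ) < (d N : ℝ) := by linarith
          have h1 : Real.log (d N) = 2 * Real.log (Real.sqrt (d N)) := by
            rw [Real.log_sqrt hdpos.le]; ring
          have h2 : Real.log (Real.sqrt (d N)) ≤ Real.sqrt (d N) := by
            have := Real.log_le_sub_one_of_pos (x := Real.sqrt (d N)) (by positivity)
            linarith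
          have h3 : Real.sqrt ((d N : ℝ)) ≤ 2 * Real.sqrt (Real.sqrt (ℓ N)) := by
            calc Real.sqrt ((d N : ℝ)) ≤ Real.sqrt (4 * Real.sqrt (ℓ N)) :=
                Real.sqrt_le_sqrt hd_ub
              _ = 2 * Real.sqrt (Real.sqrt (ℓ N)) := by
                  rw [show (4:ℝ) * Real.sqrt (ℓ N) = 2 ^ 2 * Real.sqrt (ℓ N) by norm_num,
                    Real.sqrt_mul (by positivity), Real.sqrt_sq (by norm_num)]
          linarith
        have hg0 : 0 ≤ g N := Real.logb_nonneg one_lt_two hd_lb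
        rw [Real.norm_eq_abs, Real.norm_eq_abs, abs_of_nonneg hg0,
          abs_of_nonneg (Real.sqrt_nonneg _), hgN, div_mul_eq_mul_div, div_le_div_iff_of_pos_right hlog2]
        linarith
      exact hbig.trans_isLittleO (sqrt_isLittleO_id.comp_tendsto hsqT)
    have h1o : (fun _ : ℕ => (1:ℝ)) =o[atTop] fun N : ℕ => Real.sqrt (ℓ N) := by
      rw [isLittleO_const_left]
      right
      simpa [Real.norm_eq_abs, Function.comp_def] using tendsto_abs_atTop_atTop.comp hsqT
    have claimA : (fun N : ℕ => (lam * d N + Real.logb 2 ((d N:ℝ) * (q N:ℝ)^2)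
        - 2 * Real.sqrt (2 * lam * ℓ N)) - g N) =o[atTop] fun N : ℕ => Real.sqrt (ℓ N) := by
      refine IsBigO.trans_isLittleO (isBigO_iff.mpr ⟨lam + 2 + 2 * Real.sqrt (2 * lam), ?_⟩) h1o
      filter_upwards [hfacts] with N hF
      obtain ⟨hℓ1, hL, hN1⟩ := hF
      set L := Real.logb 2 (2 * (N:ℝ)) with hLdef
      set s := Real.sqrt ((lam / 2) * L) with hsdef
      set t := Real.sqrt ((2 / lam) * L) with htdef
      have hLpos : (0:ℝ) < L := by rw [hL]; linarith
      have ht1 : 1 ≤ t := by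
        rw [htdef]
        calc (1:ℝ) = Real.sqrt 1 := Real.sqrt_one.symm
          _ ≤ _ := by
            apply Real.sqrt_le_sqrt
            have h2l : (2:ℝ) ≤ 2 / lam := by
              rw [le_div_iff₀ hlam_pos]; nlinarith
            rw [hL]; nlinarith
      have hd_lb : t ≤ (d N : ℝ) := by rw [hd N]; exact Nat.le_ceil t
      have hd_ub : (d N : ℝ) ≤ t + 1 := by
        rw [hd N]; exact (Nat.ceil_lt_add_one (Real.sqrt_nonneg _)).le
      have hq_lb : (2:ℝ) ^ s ≤ (q N : ℝ) := by rw [hq N]; exact Nat.le_ceil _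
      have hq_ub : (q N : ℝ) ≤ (2:ℝ) ^ s + 1 := by
        rw [hq N]; exact (Nat.ceil_lt_add_one (by positivity)).le
      have hq_pos : (0:ℝ) < (q N : ℝ) := lt_of_lt_of_le (by positivity) hq_lb
      have hd_pos : (0:ℝ) < (d N : ℝ) := by linarith
      have hlogsplit : Real.logb 2 ((d N:ℝ) * (q N:ℝ)^2)
          = g N + 2 * Real.logb 2 (q N) := by
        rw [Real.logb_mul (ne_of_gt hd_pos) (by positivity), Real.logb_pow]
        push_cast
        ring
      have hln : lam ≠ 0 := hlam_pos.ne'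
      have e1 : (2:ℝ) * lam * L = lam ^ 2 * ((2/lam) * L) := by field_simp
      have e2 : (2:ℝ) * lam * L = 2 ^ 2 * ((lam/2) * L) := by ring
      have key1 : lam * t = Real.sqrt (2 * lam * L) := by
        rw [htdef, e1, Real.sqrt_mul (sq_nonneg lam), Real.sqrt_sq hlam_pos.le]
      have key2 : 2 * s = Real.sqrt (2 * lam * L) := by
        rw [hsdef, e2, Real.sqrt_mul (by norm_num : (0:ℝ) ≤ (2:ℝ)^2),
          Real.sqrt_sq (by norm_num : (0:ℝ) ≤ (2:ℝ))]
      have hq_log_lb : s ≤ Real.logb 2 (q N) := by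
        have h0 : Real.logb 2 ((2:ℝ) ^ s) = s := Real.logb_rpow (by norm_num) (by norm_num)
        calc s = Real.logb 2 ((2:ℝ) ^ s) := h0.symm
          _ ≤ Real.logb 2 (q N) :=
            Real.logb_le_logb_of_le one_lt_two (by positivity) hq_lb
      have hq_log_ub : Real.logb 2 (q N) ≤ s + 1 := by
        have h2s : (1:ℝ) ≤ (2:ℝ) ^ s := by
          rw [show (1:ℝ) = (2:ℝ) ^ (0:ℝ) by simp]
          exact Real.rpow_le_rpow_of_exponent_le one_le_two (Real.sqrt_nonneg _)
        have hq2 : (q N : ℝ) ≤ (2:ℝ) ^ (s + 1) := by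
          rw [Real.rpow_add two_pos, Real.rpow_one]
          linarith
        calc Real.logb 2 (q N) ≤ Real.logb 2 ((2:ℝ) ^ (s+1)) :=
            Real.logb_le_logb_of_le one_lt_two hq_pos hq2
          _ = s + 1 := Real.logb_rpow (by norm_num) (by norm_num)
      have hA_le_B : Real.sqrt (2 * lam * ℓ N) ≤ Real.sqrt (2 * lam * L) := by
        apply Real.sqrt_le_sqrt
        rw [hL]; nlinarith
      have hB_le : Real.sqrt (2 * lam * L) ≤ Real.sqrt (2 * lam * ℓ N) + Real.sqrt (2 * lam) := by
        rw [hL, show 2 * lam * (1 + ℓ N) = 2 * lam * ℓ N + 2 * lam by ring]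
        exact sqrt_add_le' (mul_nonneg (by linarith) (by linarith)) (by linarith)
      have hdl : Real.sqrt (2 * lam * L) ≤ lam * (d N : ℝ) := by
        rw [← key1]
        exact mul_le_mul_of_nonneg_left hd_lb hlam_pos.le
      have hdu : lam * (d N : ℝ) ≤ Real.sqrt (2 * lam * L) + lam := by
        rw [← key1]
        nlinarith
      rw [Real.norm_eq_abs, norm_one, mul_one, abs_le, hlogsplit]
      have hsqnn : 0 ≤ Real.sqrt (2 * lam) := Real.sqrt_nonneg _
      constructor
      · linarith [hq_log_lb, key2, hA_le_B, hdl, Real.sqrt_nonneg (2*lam)]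
      · linarith [hq_log_ub, key2, hB_le, hdu]
    have hsum := claimA.add claimB
    have heq : (fun N : ℕ => ((lam * d N + Real.logb 2 ((d N:ℝ) * (q N:ℝ)^2)
        - 2 * Real.sqrt (2 * lam * ℓ N)) - g N) + g N)
        = fun N : ℕ => lam * d N + Real.logb 2 ((d N : ℝ) * (q N : ℝ) ^ 2) -
        2 * Real.sqrt (2 * lam * Real.logb 2 N) := by
      funext N
      simp only [hℓdef, hgdef]
      ring
    rwa [heq] at hsum
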